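/- Let λ be a weakly decreasing tuple of nonnegative integers of length n > 2, α = λ + ρ_n, α'' = (α_3,…,α_n), and for nonnegative integers u, v define F(u,v) = Σ_{μ ∈ GT_2(α'')} M(α'';μ) · x_1^{|α''|−|μ|} · ζ(P_{(u,v)⌢(μ−ρ_{n−3})}(x;t)), where (u,v)⌢ν denotes the concatenation of (u,v) with the tuple ν. Then F(λ_2, λ_2 + 1) = t · F(λ_2 + 1, λ_2) in F. -/

import Mathlib

open MvPolynomial Finset

noncomputable section

abbrev Rr : Type := MvPolynomial (Fin 2 ⊕ ℕ) ℚ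

abbrev F : Type := FractionRing Rr

/-- The variable `q`. -/
def q : F := algebraMap Rr F (X (Sum.inl 0))

/-- The variable `t`. -/
def t : F := algebraMap Rr F (X (Sum.inl 1))

/-- `x k` is the variable `x_{k+1}` of the paper (0-indexed). -/
def x (k : ℕ) : F := algebraMap Rr F (X (Sum.inr k))

/-- Substitution endomorphism of `F` induced by an injective map of variables. -/
def subF (g : Fin 2 ⊕ ℕ → Fin 2 ⊕ ℕ) (hg : Function.Injective g) : F →+* F :=
  IsFractionRing.lift (g := (algebraMap Rr F).comp (rename g).toRingHom)
    (by
      rw [RingHom.coe_comp]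
      exact (IsFractionRing.injective Rr F).comp (rename_injective g hg))

def permNat (n : ℕ) (σ : Equiv.Perm (Fin n)) : ℕ → ℕ :=
  fun k => if h : k < n then (σ ⟨k, h⟩ : ℕ) else k

lemma permNat_inj (n : ℕ) (σ : Equiv.Perm (Fin n)) : Function.Injective (permNat n σ) := by
  intro a b hab
  unfold permNat at hab
  split_ifs at hab with h1 h2 h2
  · have := σ.injective (Fin.val_injective hab)
    exact congrArg Fin.val this
  · have := (σ ⟨a, h1⟩).isLt; omega
  · have := (σ ⟨b, h2⟩).isLt; omega
  · exact hab

/-- The action of a permutation `σ ∈ S_n` on `F`, permuting `x_1, …, x_n`. -/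
def pact (n : ℕ) (σ : Equiv.Perm (Fin n)) : F →+* F :=
  subF (Sum.map id (permNat n σ)) (Function.injective_id.sumMap (permNat_inj n σ))

def shiftNat (i : ℕ) : ℕ → ℕ := fun k => if k < i then k else k + 1

lemma shiftNat_inj (i : ℕ) : Function.Injective (shiftNat i) := by
  intro a b; unfold shiftNat; split_ifs <;> omega

/-- `zeta i` is the endomorphism `ζ_{i+1}` of the paper: it fixes `q`, `t` and
`x k` for `k < i`, and sends `x k` to `x (k+1)` for `k ≥ i` (0-indexed). -/
def zeta (i : ℕ) : F →+* F :=
  subF (Sum.map id (shiftNat i)) (Function.injective_id.sumMap (shiftNat_inj i))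

/-- `zetaP i j` is `ζ_{i+1,j+1}` of the paper. -/
def zetaP (i j : ℕ) : F →+* F := (zeta (max i j)).comp (zeta (min i j))

/-- The Hall–Littlewood polynomial `P_λ(x; t)` in `n` variables. -/
def HL (n : ℕ) (lam : Fin n → ℕ) : F :=
  ∑ σ : Equiv.Perm (Fin n), pact n σ
    ((∏ i : Fin n, x i.val ^ lam i) *
      ∏ i : Fin n, ∏ j ∈ Finset.Ioi i, (x i.val - t * x j.val) / (x i.val - x j.val))

/-- `ρ_n`, 0-indexed: `rho n i = n - 1 - i`. -/
def rho (n : ℕ) : Fin n → ℕ := fun i => n - 1 - i.val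

/-- The deformed Weyl denominator `Δ_n(c) = ∏_{i<j} (x_i - c x_j)`. -/
def DeltaQ (n : ℕ) (c : F) : F := ∏ i : Fin n, ∏ j ∈ Finset.Ioi i, (x i.val - c * x j.val)

/-- The Schur polynomial `s_λ(x) = Σ_σ σ(x^{λ+ρ}/Δ_n)`. -/
def Schur (n : ℕ) (lam : Fin n → ℕ) : F :=
  ∑ σ : Equiv.Perm (Fin n), pact n σ
    ((∏ i : Fin n, x i.val ^ (lam i + rho n i)) / DeltaQ n 1)

/-- `GT2 n α` is the set of tuples `μ` of length `n` with `α_{i+1} ≤ μ_i ≤ α_i`. -/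
def GT2 (n : ℕ) (α : Fin (n+1) → ℕ) : Finset (Fin n → ℕ) :=
  Fintype.piFinset (fun i => Finset.Icc (α i.succ) (α i.castSucc))

def GLw (y a : ℕ) : F := if y = a then -q else if y + 1 = a then t else 0

def GRw (y b : ℕ) : F := if y = b then 1 else if y = b + 1 then -q * t else 0

/-- `w(μ_j)` where `a1 = α_j`, `a2 = α_{j+1}`, `m = μ_j`. -/
def wgt (a1 a2 m : ℕ) : F :=
  (if m = a1 ∨ m = a2 then 0 else (1 - q) * (1 - t)) + GLw m a1 + GRw m a2

/-- The tridiagonal determinant `M(α; μ)`. -/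
def Mdet (n : ℕ) (α : Fin (n+1) → ℕ) (μ : Fin n → ℕ) : F :=
  Matrix.det (Matrix.of fun i j : Fin n =>
    if i = j then wgt (α i.castSucc) (α i.succ) (μ i)
    else if (i : ℕ) + 1 = (j : ℕ) then 1
    else if (j : ℕ) + 1 = (i : ℕ) then GRw (μ j) (α i.castSucc) * GLw (μ i) (α i.castSucc)
    else 0)

def tot {n : ℕ} (f : Fin n → ℕ) : ℕ := ∑ i, f i


/-- `F_{λ''}(u,v) = Σ_{μ ∈ GT₂(α'')} M(α'';μ) x_1^{|α''|-|μ|} ζ(P_{(u,v)⌢(μ-ρ_{n-3})})`. -/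
def FF (m : ℕ) (lam : Fin (m + 3) → ℕ) (u v : ℕ) : F :=
  ∑ μ ∈ GT2 m (fun i => lam i.succ.succ + rho (m + 3) i.succ.succ),
    Mdet m (fun i => lam i.succ.succ + rho (m + 3) i.succ.succ) μ *
      x 0 ^ (tot (fun i : Fin (m + 1) => lam i.succ.succ + rho (m + 3) i.succ.succ) - tot μ) *
      zeta 0 (HL (m + 2) (Fin.cons u (Fin.cons v (fun i => μ i - rho m i))))


/-! ### Auxiliary lemmas -/

lemma subF_algebraMap (g : Fin 2 ⊕ ℕ → Fin 2 ⊕ ℕ) (hg : Function.Injective g) (r : Rr) :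
    subF g hg (algebraMap Rr F r) = algebraMap Rr F (rename g r) := by
  unfold subF
  rw [IsFractionRing.lift_algebraMap]
  rfl

lemma subF_t (g : Fin 2 ⊕ ℕ → Fin 2 ⊕ ℕ) (hg : Function.Injective g)
    (h : g (Sum.inl 1) = Sum.inl 1) : subF g hg t = t := by
  unfold t
  rw [subF_algebraMap, rename_X, h]

lemma pact_x (n : ℕ) (σ : Equiv.Perm (Fin n)) (k : ℕ) :
    pact n σ (x k) = x (permNat n σ k) := by
  unfold pact x
  rw [subF_algebraMap, rename_X]
  rfl

lemma pact_t (n : ℕ) (σ : Equiv.Perm (Fin n)) : pact n σ t = t :=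
  subF_t _ _ rfl

lemma zeta_t (i : ℕ) : zeta i t = t := subF_t _ _ rfl

lemma permNat_mul (n : ℕ) (σ τ : Equiv.Perm (Fin n)) (k : ℕ) :
    permNat n (σ * τ) k = permNat n σ (permNat n τ k) := by
  unfold permNat
  by_cases h1 : k < n
  · simp only [dif_pos h1, dif_pos (τ ⟨k, h1⟩).isLt, Equiv.Perm.mul_apply, Fin.eta]
  · simp only [dif_neg h1]

lemma pact_mul (n : ℕ) (σ τ : Equiv.Perm (Fin n)) (z : F) :
    pact n (σ * τ) z = pact n σ (pact n τ z) := by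
  have hfun : (Sum.map (id : Fin 2 → Fin 2) (permNat n σ)) ∘ (Sum.map id (permNat n τ))
      = Sum.map id (permNat n (σ * τ)) := by
    funext v
    cases v with
    | inl a => rfl
    | inr k => simp [permNat_mul]
  have h : (pact n (σ * τ)).comp (algebraMap Rr F)
      = ((pact n σ).comp (pact n τ)).comp (algebraMap Rr F) := by
    refine RingHom.ext fun r => ?_
    simp only [RingHom.comp_apply]
    unfold pact
    rw [subF_algebraMap, subF_algebraMap, subF_algebraMap, rename_rename, hfun]
  exact RingHom.congr_fun (IsLocalization.ringHom_ext (nonZeroDivisors Rr) h) z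

lemma x_sub_x_ne (a b : ℕ) (hab : a ≠ b) : x a - x b ≠ 0 := by
  unfold x
  rw [← map_sub]
  intro h
  have h2 : (X (Sum.inr a) - X (Sum.inr b) : Rr) = 0 :=
    IsFractionRing.injective Rr F (h.trans (map_zero _).symm)
  have hx : (X (Sum.inr a) : Rr) = X (Sum.inr b) := by linear_combination h2
  exact hab (Sum.inr.inj (MvPolynomial.X_injective hx))

lemma permNat_swap01 (m k : ℕ) :
    permNat (m+2) (Equiv.swap 0 1) k = if k = 0 then 1 else if k = 1 then 0 else k := by
  unfold permNat
  by_cases h : k < m + 2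
  · rw [dif_pos h]
    by_cases h0 : k = 0
    · subst h0
      have : (⟨0, h⟩ : Fin (m+2)) = 0 := rfl
      rw [this, Equiv.swap_apply_left]
      simp
    · by_cases h1 : k = 1
      · subst h1
        have : (⟨1, h⟩ : Fin (m+2)) = 1 := by
          ext
          simp [Fin.val_one]
        rw [this, Equiv.swap_apply_right]
        simp
      · have hne0 : (⟨k, h⟩ : Fin (m+2)) ≠ 0 := by
          intro hc
          exact h0 (by simpa using congrArg Fin.val hc)
        have hne1 : (⟨k, h⟩ : Fin (m+2)) ≠ 1 := by
          intro hc
          have := congrArg Fin.val hc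
          simp [Fin.val_one] at this
          exact h1 this
        rw [Equiv.swap_apply_of_ne_of_ne hne0 hne1]
        simp [h0, h1]
  · rw [dif_neg h]
    have h0 : k ≠ 0 := by omega
    have h1 : k ≠ 1 := by omega
    simp [h0, h1]

lemma prod_decomp (m : ℕ) :
    (∏ i : Fin (m+2), ∏ j ∈ Finset.Ioi i, (x i.val - t * x j.val) / (x i.val - x j.val))
    = (x 0 - t * x 1) / (x 0 - x 1) *
      (∏ j : Fin m, (x 0 - t * x (j.val+2)) / (x 0 - x (j.val+2))) *
      (∏ j : Fin m, (x 1 - t * x (j.val+2)) / (x 1 - x (j.val+2))) *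
      ∏ i : Fin m, ∏ j ∈ Finset.Ioi i,
        (x (i.val+2) - t * x (j.val+2)) / (x (i.val+2) - x (j.val+2)) := by
  rw [Fin.prod_univ_succ, Fin.prod_univ_succ]
  have e0 : (∏ j ∈ Finset.Ioi (0 : Fin (m+2)), (x (0:Fin (m+2)).val - t * x j.val) / (x (0:Fin (m+2)).val - x j.val))
      = (x 0 - t * x 1) / (x 0 - x 1) *
        ∏ j : Fin m, (x 0 - t * x (j.val+2)) / (x 0 - x (j.val+2)) := by
    rw [Fin.prod_Ioi_zero, Fin.prod_univ_succ]
    norm_num [Fin.val_succ]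
  have e1 : (∏ j ∈ Finset.Ioi ((0 : Fin (m+1)).succ), (x ((0 : Fin (m+1)).succ : Fin (m+2)).val - t * x j.val) / (x ((0 : Fin (m+1)).succ : Fin (m+2)).val - x j.val))
      = ∏ j : Fin m, (x 1 - t * x (j.val+2)) / (x 1 - x (j.val+2)) := by
    rw [Fin.prod_Ioi_succ, Fin.prod_Ioi_zero]
    refine Finset.prod_congr rfl fun j _ => ?_
    have h1 : (((0 : Fin (m+1)).succ : Fin (m+2)).val) = 1 := by simp
    have h2 : ((j.succ.succ : Fin (m+1+1)).val) = j.val + 2 := by simp [Fin.val_succ]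
    rw [h1, h2]
  have e2 : ∀ i : Fin m, (∏ j ∈ Finset.Ioi ((i.succ.succ : Fin (m+2))), (x (i.succ.succ : Fin (m+2)).val - t * x j.val) / (x (i.succ.succ : Fin (m+2)).val - x j.val))
      = ∏ j ∈ Finset.Ioi i, (x (i.val+2) - t * x (j.val+2)) / (x (i.val+2) - x (j.val+2)) := by
    intro i
    rw [Fin.prod_Ioi_succ, Fin.prod_Ioi_succ]
    refine Finset.prod_congr rfl fun j _ => ?_
    have h1 : ((i.succ.succ : Fin (m+1+1)).val) = i.val + 2 := by simp [Fin.val_succ]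
    have h2 : ((j.succ.succ : Fin (m+1+1)).val) = j.val + 2 := by simp [Fin.val_succ]
    rw [h1, h2]
  rw [e0, e1, Finset.prod_congr rfl (fun i _ => e2 i)]
  ring

lemma prod_pow_decomp (m : ℕ) (a b : ℕ) (ν : Fin m → ℕ) :
    (∏ i : Fin (m+2), x i.val ^ (Fin.cons a (Fin.cons b ν) : Fin (m+2) → ℕ) i)
    = x 0 ^ a * x 1 ^ b * ∏ i : Fin m, x (i.val+2) ^ ν i := by
  rw [Fin.prod_univ_succ, Fin.prod_univ_succ]
  norm_num [Fin.val_succ, Fin.cons_zero, Fin.cons_succ, mul_assoc]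

lemma two_ne_zero_F : (2 : F) ≠ 0 := by
  intro h
  have h2 : (2 : Rr) = 0 := by
    apply IsFractionRing.injective Rr F
    rw [map_ofNat, map_zero]
    exact_mod_cast h
  exact two_ne_zero h2

lemma key_identity (a : ℕ) (X0 X1 T M B0 B1 C : F) (hd : X0 - X1 ≠ 0) :
    X0^a * X1^(a+1) * M * ((X0 - T*X1)/(X0-X1) * B0 * B1 * C)
      + X1^a * X0^(a+1) * M * ((X1 - T*X0)/(X1-X0) * B1 * B0 * C)
    = T * (X0^(a+1) * X1^a * M * ((X0 - T*X1)/(X0-X1) * B0 * B1 * C)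
      + X1^(a+1) * X0^a * M * ((X1 - T*X0)/(X1-X0) * B1 * B0 * C)) := by
  have hd' : X1 - X0 ≠ 0 := fun h => hd (by linear_combination -h)
  field_simp
  ring

set_option maxHeartbeats 1600000 in
/-- The key straightening identity for Hall–Littlewood symmetrizers. -/
lemma HL_swap (m : ℕ) (a : ℕ) (ν : Fin m → ℕ) :
    HL (m+2) (Fin.cons a (Fin.cons (a+1) ν)) = t * HL (m+2) (Fin.cons (a+1) (Fin.cons a ν)) := by
  classical
  set s : Equiv.Perm (Fin (m+2)) := Equiv.swap 0 1 with hs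
  set B0 : F := ∏ j : Fin m, (x 0 - t * x (j.val+2)) / (x 0 - x (j.val+2)) with hB0
  set B1 : F := ∏ j : Fin m, (x 1 - t * x (j.val+2)) / (x 1 - x (j.val+2)) with hB1
  set C : F := ∏ i : Fin m, ∏ j ∈ Finset.Ioi i,
    (x (i.val+2) - t * x (j.val+2)) / (x (i.val+2) - x (j.val+2)) with hC
  set M : F := ∏ i : Fin m, x (i.val+2) ^ ν i with hM
  have px0 : pact (m+2) s (x 0) = x 1 := by rw [pact_x, permNat_swap01]; norm_num
  have px1 : pact (m+2) s (x 1) = x 0 := by rw [pact_x, permNat_swap01]; norm_num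
  have px2 : ∀ k : ℕ, pact (m+2) s (x (k+2)) = x (k+2) := by
    intro k
    rw [pact_x, permNat_swap01]
    have h1 : k + 2 ≠ 1 := by omega
    norm_num [h1]
  have pt := pact_t (m+2) s
  have psB0 : pact (m+2) s B0 = B1 := by
    rw [hB0, hB1, map_prod]
    refine Finset.prod_congr rfl fun j _ => ?_
    rw [map_div₀, map_sub, map_sub, map_mul, px0, pt, px2]
  have psB1 : pact (m+2) s B1 = B0 := by
    rw [hB0, hB1, map_prod]
    refine Finset.prod_congr rfl fun j _ => ?_
    rw [map_div₀, map_sub, map_sub, map_mul, px1, pt, px2]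
  have psC : pact (m+2) s C = C := by
    rw [hC, map_prod]
    refine Finset.prod_congr rfl fun i _ => ?_
    rw [map_prod]
    refine Finset.prod_congr rfl fun j _ => ?_
    rw [map_div₀, map_sub, map_sub, map_mul, px2, pt, px2]
  have psM : pact (m+2) s M = M := by
    rw [hM, map_prod]
    refine Finset.prod_congr rfl fun i _ => ?_
    rw [map_pow, px2]
  have HLrw : ∀ p b : ℕ, HL (m+2) (Fin.cons p (Fin.cons b ν))
      = ∑ σ : Equiv.Perm (Fin (m+2)), pact (m+2) σ
          (x 0 ^ p * x 1 ^ b * M * ((x 0 - t * x 1) / (x 0 - x 1) * B0 * B1 * C)) := by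
    intro p b
    unfold HL
    refine Finset.sum_congr rfl fun σ _ => ?_
    congr 1
    rw [prod_pow_decomp, prod_decomp, hB0, hB1, hC, hM]
  have psZ : ∀ p b : ℕ, pact (m+2) s
      (x 0 ^ p * x 1 ^ b * M * ((x 0 - t * x 1) / (x 0 - x 1) * B0 * B1 * C))
      = x 1 ^ p * x 0 ^ b * M * ((x 1 - t * x 0) / (x 1 - x 0) * B1 * B0 * C) := by
    intro p b
    simp only [map_mul, map_pow, map_div₀, map_sub, px0, px1, pt, psB0, psB1, psC, psM]
  have reix : ∀ z : F, (∑ σ : Equiv.Perm (Fin (m+2)), pact (m+2) σ (pact (m+2) s z))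
      = ∑ σ : Equiv.Perm (Fin (m+2)), pact (m+2) σ z := by
    intro z
    calc (∑ σ : Equiv.Perm (Fin (m+2)), pact (m+2) σ (pact (m+2) s z))
        = ∑ σ : Equiv.Perm (Fin (m+2)), pact (m+2) ((Equiv.mulRight s) σ) z := by
          refine Finset.sum_congr rfl fun σ _ => ?_
          rw [Equiv.coe_mulRight, pact_mul]
      _ = ∑ σ : Equiv.Perm (Fin (m+2)), pact (m+2) σ z := Equiv.sum_comp (Equiv.mulRight s) (fun σ => pact (m+2) σ z)
  have hd : x 0 - x 1 ≠ 0 := x_sub_x_ne 0 1 (by norm_num)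
  have key : (x 0 ^ a * x 1 ^ (a+1) * M * ((x 0 - t * x 1) / (x 0 - x 1) * B0 * B1 * C))
        + pact (m+2) s (x 0 ^ a * x 1 ^ (a+1) * M * ((x 0 - t * x 1) / (x 0 - x 1) * B0 * B1 * C))
      = t * ((x 0 ^ (a+1) * x 1 ^ a * M * ((x 0 - t * x 1) / (x 0 - x 1) * B0 * B1 * C))
        + pact (m+2) s (x 0 ^ (a+1) * x 1 ^ a * M * ((x 0 - t * x 1) / (x 0 - x 1) * B0 * B1 * C))) := by
    rw [psZ, psZ]
    exact key_identity a (x 0) (x 1) t M B0 B1 C hd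
  rw [HLrw a (a+1), HLrw (a+1) a]
  apply mul_left_cancel₀ two_ne_zero_F
  calc (2 : F) * ∑ σ : Equiv.Perm (Fin (m+2)), pact (m+2) σ
          (x 0 ^ a * x 1 ^ (a+1) * M * ((x 0 - t * x 1) / (x 0 - x 1) * B0 * B1 * C))
      = (∑ σ : Equiv.Perm (Fin (m+2)), pact (m+2) σ
          (x 0 ^ a * x 1 ^ (a+1) * M * ((x 0 - t * x 1) / (x 0 - x 1) * B0 * B1 * C)))
        + ∑ σ : Equiv.Perm (Fin (m+2)), pact (m+2) σ (pact (m+2) s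
          (x 0 ^ a * x 1 ^ (a+1) * M * ((x 0 - t * x 1) / (x 0 - x 1) * B0 * B1 * C))) := by
        rw [reix]; ring
    _ = ∑ σ : Equiv.Perm (Fin (m+2)), pact (m+2) σ
          ((x 0 ^ a * x 1 ^ (a+1) * M * ((x 0 - t * x 1) / (x 0 - x 1) * B0 * B1 * C))
            + pact (m+2) s (x 0 ^ a * x 1 ^ (a+1) * M * ((x 0 - t * x 1) / (x 0 - x 1) * B0 * B1 * C))) := by
        rw [← Finset.sum_add_distrib]
        exact Finset.sum_congr rfl fun σ _ => (map_add _ _ _).symm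
    _ = ∑ σ : Equiv.Perm (Fin (m+2)), pact (m+2) σ
          (t * ((x 0 ^ (a+1) * x 1 ^ a * M * ((x 0 - t * x 1) / (x 0 - x 1) * B0 * B1 * C))
            + pact (m+2) s (x 0 ^ (a+1) * x 1 ^ a * M * ((x 0 - t * x 1) / (x 0 - x 1) * B0 * B1 * C)))) := by
        rw [key]
    _ = ∑ σ : Equiv.Perm (Fin (m+2)), t * (pact (m+2) σ
          (x 0 ^ (a+1) * x 1 ^ a * M * ((x 0 - t * x 1) / (x 0 - x 1) * B0 * B1 * C))
          + pact (m+2) σ (pact (m+2) s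
          (x 0 ^ (a+1) * x 1 ^ a * M * ((x 0 - t * x 1) / (x 0 - x 1) * B0 * B1 * C)))) := by
        refine Finset.sum_congr rfl fun σ _ => ?_
        rw [map_mul, pact_t, map_add]
    _ = (2 : F) * (t * ∑ σ : Equiv.Perm (Fin (m+2)), pact (m+2) σ
          (x 0 ^ (a+1) * x 1 ^ a * M * ((x 0 - t * x 1) / (x 0 - x 1) * B0 * B1 * C))) := by
        rw [← Finset.mul_sum, Finset.sum_add_distrib, reix]
        ring

/-- **Proposition (shift identity for `F_{λ''}`).**
`F_{λ''}(λ_2, λ_2 + 1) = t ⬝ F_{λ''}(λ_2 + 1, λ_2)`. -/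
theorem FF_swap (m : ℕ) (lam : Fin (m + 3) → ℕ)
    (hlam : ∀ i j : Fin (m + 3), i ≤ j → lam j ≤ lam i) :
    FF m lam (lam 1) (lam 1 + 1) = t * FF m lam (lam 1 + 1) (lam 1) := by
  unfold FF
  rw [Finset.mul_sum]
  refine Finset.sum_congr rfl fun μ _ => ?_
  rw [HL_swap m (lam 1) (fun i => μ i - rho m i), map_mul, zeta_t]
  ring

end
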